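/- Let 1 < r < √2 and define Θ(ℓ) = arccos(1 − r²/(2 − ℓ²/2)) for ℓ ∈ [0,r], so that (ℓ, Θ(ℓ)) lies on the boundary part ∂^θ of D_r where ‖v₂ − v₄‖ = r. Then the function ℓ ↦ κ(ℓ, Θ(ℓ)) is non-increasing on [0,r]. -/

import Mathlib

open Real

/-- Total curvature of the equilateral spatial quadrilateral `P₄(ℓ,θ)` in
action-angle coordinates. -/
noncomputable def totalCurv (ℓ θ : ℝ) : ℝ :=
  2 * Real.arccos (-ℓ ^ 2 / 4 - (1 - ℓ ^ 2 / 4) * Real.cos θ) +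
    2 * Real.arccos (ℓ ^ 2 / 2 - 1)

lemma totalCurv_boundary_eq (r ℓ : ℝ) (h1 : 1 < r) (h2 : r < Real.sqrt 2)
    (hℓ : ℓ ∈ Set.Icc 0 r) :
    totalCurv ℓ (Real.arccos (1 - r ^ 2 / (2 - ℓ ^ 2 / 2)))
      = 2 * Real.arccos (r ^ 2 / 2 - 1) + 2 * Real.arccos (ℓ ^ 2 / 2 - 1) := by
  obtain ⟨h0, hr⟩ := hℓ
  have hr2 : r ^ 2 < 2 := by
    have := Real.sq_sqrt (by norm_num : (2:ℝ) ≥ 0)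
    nlinarith [Real.sqrt_nonneg 2]
  have hℓ2 : ℓ ^ 2 ≤ r ^ 2 := by nlinarith
  have hden : (0:ℝ) < 2 - ℓ ^ 2 / 2 := by nlinarith
  have hx1 : 1 - r ^ 2 / (2 - ℓ ^ 2 / 2) ≤ 1 := by
    have : 0 < r ^ 2 / (2 - ℓ ^ 2 / 2) := by positivity
    linarith
  have hx0 : -1 ≤ 1 - r ^ 2 / (2 - ℓ ^ 2 / 2) := by
    have h : r ^ 2 / (2 - ℓ ^ 2 / 2) ≤ 2 := by
      rw [div_le_iff₀ hden]; nlinarith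
    linarith
  have hcos : Real.cos (Real.arccos (1 - r ^ 2 / (2 - ℓ ^ 2 / 2)))
      = 1 - r ^ 2 / (2 - ℓ ^ 2 / 2) := Real.cos_arccos hx0 hx1
  have harg : -ℓ ^ 2 / 4 - (1 - ℓ ^ 2 / 4) * (1 - r ^ 2 / (2 - ℓ ^ 2 / 2))
      = r ^ 2 / 2 - 1 := by
    have hne : (2:ℝ) - ℓ ^ 2 / 2 ≠ 0 := ne_of_gt hden
    have hne4 : (4:ℝ) - ℓ ^ 2 ≠ 0 := by nlinarith
    field_simp
    linear_combination (4 * r ^ 2) * inv_mul_cancel₀ hne4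
  unfold totalCurv
  rw [hcos, harg]

/-- For `1 < r < √2`, along the boundary part `∂^θ` of `D_r`, parametrized by
`ℓ ↦ (ℓ, Θ(ℓ))` with `Θ(ℓ) = arccos(1 − r²/(2 − ℓ²/2))`, the total curvature
is non-increasing in `ℓ` on `[0,r]`. -/
theorem totalCurv_antitoneOn_boundary (r : ℝ) (h1 : 1 < r)
    (h2 : r < Real.sqrt 2) :
    AntitoneOn
      (fun ℓ : ℝ => totalCurv ℓ (Real.arccos (1 - r ^ 2 / (2 - ℓ ^ 2 / 2))))
      (Set.Icc 0 r) := by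
  intro a ha b hb hab
  simp only
  rw [totalCurv_boundary_eq r a h1 h2 ha, totalCurv_boundary_eq r b h1 h2 hb]
  have hr2 : r ^ 2 < 2 := by
    have := Real.sq_sqrt (by norm_num : (2:ℝ) ≥ 0)
    nlinarith [Real.sqrt_nonneg 2]
  have hma : a ^ 2 / 2 - 1 ∈ Set.Icc (-1:ℝ) 1 := by
    constructor <;> nlinarith [ha.1, ha.2, sq_nonneg a]
  have hmb : b ^ 2 / 2 - 1 ∈ Set.Icc (-1:ℝ) 1 := by
    constructor <;> nlinarith [hb.1, hb.2, sq_nonneg b]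
  have h₂ : a ^ 2 / 2 - 1 ≤ b ^ 2 / 2 - 1 := by nlinarith [ha.1]
  have := Real.strictAntiOn_arccos.antitoneOn hma hmb h₂
  linarith
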